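/- arXiv:2602.10737 — 3 statements merged into one kernel-verified Lean document; each statement's English description precedes it below -/
import Mathlib

section
/- Let D = diag(d₁,...,dₙ) be an n×t complex matrix (n ≤ t) with dᵢ ≠ 0 for all i and |dᵢ|² pairwise distinct. If A ∈ ℂ^{n×t} is such that both AD* and D*A are Hermitian, then A is a diagonal matrix (A_{ij} = 0 for all i ≠ j, including A_{ij} = 0 for j > n). -/
open Matrix

/-- If `D = diag(d)` is an `n×t` rectangular diagonal matrix with nonzero entries whose
squared absolute values are pairwise distinct, and both `AD*` and `D*A` are Hermitian,
then `A` is diagonal. -/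
theorem stmt3 (n t : ℕ) (hnt : n ≤ t) (d : Fin n → ℂ)
    (hd : ∀ i, d i ≠ 0)
    (hdist : ∀ i j : Fin n, i ≠ j → ‖d i‖ ^ 2 ≠ ‖d j‖ ^ 2)
    (D : Matrix (Fin n) (Fin t) ℂ)
    (hD : D = Matrix.of fun (i : Fin n) (j : Fin t) => if (j : ℕ) = (i : ℕ) then d i else 0)
    (A : Matrix (Fin n) (Fin t) ℂ)
    (h1 : (A * Dᴴ).IsHermitian) (h2 : (Dᴴ * A).IsHermitian) :
    ∀ (i : Fin n) (j : Fin t), (j : ℕ) ≠ (i : ℕ) → A i j = 0 := by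
  intro i j hij
  set e : Fin n → Fin t := Fin.castLE hnt with he
  -- entries of A * Dᴴ
  have hAD : ∀ p q : Fin n, (A * Dᴴ) p q = A p (e q) * star (d q) := by
    intro p q
    rw [mul_apply, Finset.sum_eq_single (e q)]
    · simp [hD, e]
    · intro b _ hb
      have hbv : (b : ℕ) ≠ (q : ℕ) := fun h => hb (Fin.ext (by simpa [e] using h))
      simp [hD, hbv]
    · simp
  -- entries of Dᴴ * A on rows `e p`
  have hDA : ∀ (p : Fin n) (q : Fin t), (Dᴴ * A) (e p) q = star (d p) * A p q := by
    intro p q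
    rw [mul_apply, Finset.sum_eq_single p]
    · simp [hD, e]
    · intro b _ hb
      have hbv : ((e p : Fin t) : ℕ) ≠ (b : ℕ) := by
        simpa [e] using fun h => hb (Fin.ext h.symm)
      simp [hD, hbv]
    · simp
  -- rows of Dᴴ * A with index ≥ n vanish
  have hDA0 : ∀ (p : Fin t), n ≤ (p : ℕ) → ∀ q : Fin t, (Dᴴ * A) p q = 0 := by
    intro p hp q
    rw [mul_apply]
    apply Finset.sum_eq_zero
    intro b _
    have hbv : ((p : Fin t) : ℕ) ≠ (b : ℕ) := by
      have : (b : ℕ) < n := b.isLt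
      omega
    simp [hD, hbv]
  by_cases hj : (j : ℕ) < n
  · set j' : Fin n := ⟨(j : ℕ), hj⟩ with hj'
    have hej : j = e j' := Fin.ext (by simp [e, hj'])
    have hij' : i ≠ j' := by
      intro h
      exact hij (by simp [hj', h])
    have E1 : A i (e j') * star (d j') = d i * star (A j' (e i)) := by
      have h := h1.apply j' i
      rw [hAD, hAD] at h
      have h' := congrArg star h
      rw [star_star, StarMul.star_mul, star_star] at h'
      linear_combination h'
    have E2 : star (d i) * A i (e j') = d j' * star (A j' (e i)) := by
      have h := h2.apply (e j') (e i)
      rw [hDA, hDA] at h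
      have h' := congrArg star h
      rw [star_star, StarMul.star_mul, star_star] at h'
      linear_combination h'
    have key : A i (e j') * (star (d i) * d i - d j' * star (d j')) = 0 := by
      linear_combination d i * E2 - d j' * E1
    have hne : star (d i) * d i - d j' * star (d j') ≠ 0 := by
      have hnsq : (Complex.normSq (d i) : ℂ) ≠ (Complex.normSq (d j') : ℂ) := by
        have h := hdist i j' hij'
        rw [Complex.sq_norm, Complex.sq_norm] at h
        exact_mod_cast h
      have e1 : star (d i) * d i = (Complex.normSq (d i) : ℂ) := by
        rw [Complex.star_def, mul_comm, Complex.mul_conj]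
      have e2 : d j' * star (d j') = (Complex.normSq (d j') : ℂ) := by
        rw [Complex.star_def, Complex.mul_conj]
      rw [e1, e2, sub_ne_zero]
      exact hnsq
    rw [hej]
    exact (mul_eq_zero.mp key).resolve_right hne
  · have h := h2.apply (e i) j
    rw [hDA, hDA0 j (le_of_not_gt hj) (e i), star_zero] at h
    rcases mul_eq_zero.mp h.symm with h0 | h0
    · exact absurd h0 (star_ne_zero.mpr (hd i))
    · exact h0
end

section
/- Let D = diag(d₁,...,dₙ) be an n×t matrix with all dᵢ real, dᵢ ≠ 0, and dᵢ² pairwise distinct. If A ∈ ℂ^{n×t} is such that AD* and D*A are both Hermitian, then A is a real diagonal matrix (all entries real, off-diagonal entries zero). -/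
open Matrix

/-- If `D = diag(d)` with `d` real, nonzero, and `dᵢ²` pairwise distinct, and both
`AD*` and `D*A` are Hermitian, then `A` is a real diagonal matrix. -/
theorem stmt4 (n t : ℕ) (hnt : n ≤ t) (d : Fin n → ℝ)
    (hd : ∀ i, d i ≠ 0)
    (hdist : ∀ i j : Fin n, i ≠ j → d i ^ 2 ≠ d j ^ 2)
    (D : Matrix (Fin n) (Fin t) ℂ)
    (hD : D = Matrix.of fun (i : Fin n) (j : Fin t) => if (j : ℕ) = (i : ℕ) then (d i : ℂ) else 0)
    (A : Matrix (Fin n) (Fin t) ℂ)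
    (h1 : (A * Dᴴ).IsHermitian) (h2 : (Dᴴ * A).IsHermitian) :
    (∀ (i : Fin n) (j : Fin t), (j : ℕ) ≠ (i : ℕ) → A i j = 0) ∧
    (∀ (i : Fin n) (j : Fin t), (A i j).im = 0) := by
  set e : Fin n → Fin t := fun i => Fin.castLE hnt i with he
  have hDe : ∀ (i : Fin n) (j : Fin t), D i j = if j = e i then (d i : ℂ) else 0 := by
    intro i j
    rw [hD]
    by_cases h : (j : ℕ) = (i : ℕ)
    · simp [h, Fin.ext_iff, e]
    · simp [h, Fin.ext_iff, e]
  have hAD : ∀ (i k : Fin n), (A * Dᴴ) i k = A i (e k) * (d k : ℂ) := by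
    intro i k
    simp only [Matrix.mul_apply, conjTranspose_apply, hDe]
    simp [apply_ite, mul_ite, Finset.sum_ite_eq', Complex.conj_ofReal]
  have hDA : ∀ (k : Fin n) (l : Fin t), (Dᴴ * A) (e k) l = (d k : ℂ) * A k l := by
    intro k l
    simp only [Matrix.mul_apply, conjTranspose_apply, hDe]
    have : ∀ i : Fin n, (e k = e i) ↔ (k = i) := by
      intro i; simp [e, Fin.ext_iff]
    simp [this, apply_ite, ite_mul, Finset.sum_ite_eq, Complex.conj_ofReal]
  have hDA0 : ∀ (l j : Fin t), n ≤ (j : ℕ) → (Dᴴ * A) j l = 0 := by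
    intro l j hj
    simp only [Matrix.mul_apply, conjTranspose_apply, hDe]
    apply Finset.sum_eq_zero
    intro i _
    have : j ≠ e i := by
      intro h
      rw [h] at hj
      simp [e] at hj
      omega
    simp [this]
  have part1 : ∀ (i : Fin n) (j : Fin t), (j : ℕ) ≠ (i : ℕ) → A i j = 0 := by
    intro i j hij
    by_cases hjn : (j : ℕ) < n
    · set k : Fin n := ⟨(j : ℕ), hjn⟩ with hk
      have hje : j = e k := by simp [e, Fin.ext_iff, hk]
      have hki : k ≠ i := by
        intro h; apply hij; rw [← h]
      -- equation from h1
      have eq1 : star (A k (e i) * (d i : ℂ)) = A i (e k) * (d k : ℂ) := by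
        rw [← hAD, ← hAD]; exact h1.apply i k
      -- equation from h2
      have eq2 : star ((d k : ℂ) * A k (e i)) = (d i : ℂ) * A i (e k) := by
        rw [← hDA, ← hDA]; exact h2.apply (e i) (e k)
      set a := star (A k (e i)) with ha
      set b := A i (e k) with hb
      have e1 : a * (d i : ℂ) = b * (d k : ℂ) := by
        simpa [ha, Complex.conj_ofReal, mul_comm] using eq1
      have e2 : (d k : ℂ) * a = (d i : ℂ) * b := by
        simpa [ha, Complex.conj_ofReal] using eq2
      have key : b * ((d k : ℂ) ^ 2 - (d i : ℂ) ^ 2) = 0 := by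
        have h3 : a * (d i : ℂ) * (d k : ℂ) = b * (d k : ℂ) ^ 2 := by
          rw [e1]; ring
        have h4 : (d k : ℂ) * a * (d i : ℂ) = (d i : ℂ) ^ 2 * b := by
          rw [e2]; ring
        have : b * (d k : ℂ) ^ 2 = (d i : ℂ) ^ 2 * b := by
          rw [← h3, ← h4]; ring
        linear_combination this
      have hne : (d k : ℂ) ^ 2 - (d i : ℂ) ^ 2 ≠ 0 := by
        intro h
        apply hdist k i hki
        have : (d k : ℂ) ^ 2 = (d i : ℂ) ^ 2 := by linear_combination h
        exact_mod_cast this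
      rw [hje]
      exact (mul_eq_zero.mp key).resolve_right hne
    · push_neg at hjn
      have eqz : star ((Dᴴ * A) j (e i)) = (Dᴴ * A) (e i) j := h2.apply (e i) j
      rw [hDA0 (e i) j hjn, hDA] at eqz
      simp only [star_zero] at eqz
      have hd' : (d i : ℂ) ≠ 0 := by exact_mod_cast hd i
      have := mul_eq_zero.mp eqz.symm
      exact this.resolve_left hd'
  refine ⟨part1, ?_⟩
  intro i j
  by_cases hij : (j : ℕ) = (i : ℕ)
  · have hje : j = e i := by simp [e, Fin.ext_iff, hij]
    have eqd : star ((Dᴴ * A) (e i) (e i)) = (Dᴴ * A) (e i) (e i) := h2.apply (e i) (e i)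
    rw [hDA] at eqd
    have : star (A i (e i)) = A i (e i) := by
      have hd' : (d i : ℂ) ≠ 0 := by exact_mod_cast hd i
      have : (d i : ℂ) * star (A i (e i)) = (d i : ℂ) * A i (e i) := by
        simpa [Complex.conj_ofReal] using eqd
      exact mul_left_cancel₀ hd' this
    rw [hje]
    exact Complex.conj_eq_iff_im.mp this
  · rw [part1 i j hij]; simp
end

section
/- Let y = (y₁,...,yₙ) ∈ ℝⁿ have nonzero, pairwise-distinct-in-absolute-value entries, and let v₀ = diag(y) ∈ ℂ^{n×t}. With respect to the real inner product q(A,B) = Re Tr(AB*) on ℂ^{n×t}, the orthogonal complement of the space T = {Z₁ diag(y) + diag(y) Z₂* : Z₁ ∈ u(n), Z₂ ∈ u(t)} equals the space of real diagonal matrices {diag(a) : a ∈ ℝⁿ}. Consequently ℂ^{n×t}, viewed as a real vector space, is the q-orthogonal direct sum of the real diagonal matrices and T. -/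
open Matrix Finset
open scoped ComplexConjugate


open Matrix

/-- The `n×t` rectangular diagonal matrix of a real vector. -/
def rdiag (n t : ℕ) (x : Fin n → ℝ) : Matrix (Fin n) (Fin t) ℂ :=
  Matrix.of fun i j => if (j : ℕ) = (i : ℕ) then (x i : ℂ) else 0


namespace Stmt16Aux

variable {n t : ℕ}

/-- single entry matrix -/
def sg {m k : Type*} [DecidableEq m] [DecidableEq k] (p : m) (q : k) (c : ℂ) : Matrix m k ℂ :=
  Matrix.of fun i j => if i = p ∧ j = q then c else 0

lemma sg_skew {m : Type*} [DecidableEq m] (p q : m) (c : ℂ) :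
    (sg p q c - sg q p (conj c))ᴴ = -(sg p q c - sg q p (conj c)) := by
  ext i j
  by_cases h1 : j = p <;> by_cases h2 : i = q <;> by_cases h3 : j = q <;> by_cases h4 : i = p <;>
    simp [sg, conjTranspose_apply, h1, h2, h3, h4] <;> by_cases h5 : p = q <;>
    simp_all <;> ring_nf

lemma key0 (u : ℂ) (h : ∀ c : ℂ, (c * u).re = 0) : u = 0 := by
  have h1 := h (conj u)
  rw [show conj u * u = u * conj u from mul_comm _ _, Complex.mul_conj] at h1
  exact Complex.normSq_eq_zero.mp (by exact_mod_cast h1)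

lemma key (u v : ℂ) (h : ∀ c : ℂ, (conj c * u - c * v).re = 0) : u = conj v := by
  have h1 := h (u - conj v)
  set w : ℂ := u - conj v with hw
  have h2 : conj w * u - w * v = w * conj w + (conj (w * v) - w * v) := by
    rw [show u = w + conj v from by rw [hw]; ring, _root_.map_mul]
    ring
  rw [h2, Complex.mul_conj, Complex.add_re, Complex.sub_re, Complex.conj_re, sub_self,
    add_zero, Complex.ofReal_re] at h1
  have : w = 0 := Complex.normSq_eq_zero.mp h1
  have := sub_eq_zero.mp this
  exact this

lemma trace_form (A B : Matrix (Fin n) (Fin t) ℂ) :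
    trace (A * Bᴴ) = ∑ i, ∑ j, A i j * conj (B i j) := by
  simp [Matrix.trace, Matrix.diag, Matrix.mul_apply, Matrix.conjTranspose_apply,
    RCLike.star_def]

lemma mulD (hnt : n ≤ t) (y : Fin n → ℝ) (Z : Matrix (Fin n) (Fin n) ℂ) (i : Fin n) (j : Fin t) :
    (Z * rdiag n t y) i j = if h : (j : ℕ) < n then Z i ⟨j, h⟩ * (y ⟨j, h⟩ : ℂ) else 0 := by
  rw [Matrix.mul_apply]
  split
  · next h =>
    rw [Finset.sum_eq_single (⟨(j : ℕ), h⟩ : Fin n)]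
    · simp [rdiag]
    · intro p _ hp
      have : (j : ℕ) ≠ (p : ℕ) := fun hh => hp (Fin.ext hh.symm)
      simp [rdiag, this]
    · simp
  · next h =>
    apply Finset.sum_eq_zero
    intro p _
    have : (j : ℕ) ≠ (p : ℕ) := by omega
    simp [rdiag, this]

lemma Dmul (hnt : n ≤ t) (y : Fin n → ℝ) (Z : Matrix (Fin t) (Fin t) ℂ) (i : Fin n) (j : Fin t) :
    (rdiag n t y * Z) i j = (y i : ℂ) * Z (Fin.castLE hnt i) j := by
  rw [Matrix.mul_apply]
  rw [Finset.sum_eq_single (Fin.castLE hnt i)]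
  · simp [rdiag]
  · intro q _ hq
    have : (q : ℕ) ≠ (i : ℕ) := fun hh => hq (Fin.ext (by simpa using hh))
    simp [rdiag, this]
  · simp

lemma sum_dlt (hnt : n ≤ t) (f : Fin n → ℂ) :
    (∑ j : Fin t, if h : (j : ℕ) < n then f ⟨j, h⟩ else 0) = ∑ i : Fin n, f i := by
  classical
  symm
  calc ∑ i : Fin n, f i
      = ∑ i : Fin n, (if h : ((Fin.castLE hnt i : Fin t) : ℕ) < n
          then f ⟨(Fin.castLE hnt i : Fin t), h⟩ else 0) := by
        apply Finset.sum_congr rfl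
        intro i _
        rw [dif_pos (by simpa using i.2)]
        rfl
    _ = ∑ j ∈ Finset.univ.map (Fin.castLEEmb hnt),
          (if h : (j : ℕ) < n then f ⟨j, h⟩ else 0) := by
        rw [Finset.sum_map]
        rfl
    _ = ∑ j : Fin t, (if h : (j : ℕ) < n then f ⟨j, h⟩ else 0) := by
        apply Finset.sum_subset (Finset.subset_univ _)
        intro j _ hj
        rw [dif_neg]
        intro h
        apply hj
        rw [Finset.mem_map]
        exact ⟨⟨j, h⟩, Finset.mem_univ _, Fin.ext rfl⟩

lemma traceZ1 (hnt : n ≤ t) (y : Fin n → ℝ) (A : Matrix (Fin n) (Fin t) ℂ)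
    (Z : Matrix (Fin n) (Fin n) ℂ) :
    (trace (A * (Z * rdiag n t y)ᴴ)) =
      ∑ i, ∑ k, A i (Fin.castLE hnt k) * conj (Z i k) * (y k : ℂ) := by
  rw [trace_form]
  apply Finset.sum_congr rfl
  intro i _
  rw [← sum_dlt hnt (fun k => A i (Fin.castLE hnt k) * conj (Z i k) * (y k : ℂ))]
  apply Finset.sum_congr rfl
  intro j _
  rw [mulD hnt]
  split
  · next h =>
    have hc : Fin.castLE hnt (⟨(j : ℕ), h⟩ : Fin n) = j := Fin.ext rfl
    rw [hc, _root_.map_mul, Complex.conj_ofReal]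
    ring
  · simp

lemma traceZ2 (hnt : n ≤ t) (y : Fin n → ℝ) (A : Matrix (Fin n) (Fin t) ℂ)
    (Z : Matrix (Fin t) (Fin t) ℂ) :
    (trace (A * (rdiag n t y * Zᴴ)ᴴ)) =
      ∑ i, ∑ j, A i j * (y i : ℂ) * Z j (Fin.castLE hnt i) := by
  rw [trace_form]
  apply Finset.sum_congr rfl
  intro i _
  apply Finset.sum_congr rfl
  intro j _
  rw [Dmul hnt]
  simp only [conjTranspose_apply, RCLike.star_def, _root_.map_mul, Complex.conj_ofReal,
    Complex.conj_conj]
  ring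

lemma G1_sg (hnt : n ≤ t) (y : Fin n → ℝ) (A : Matrix (Fin n) (Fin t) ℂ)
    (p q : Fin n) (c : ℂ) :
    (∑ i, ∑ k, A i (Fin.castLE hnt k) * conj ((sg p q c) i k) * (y k : ℂ)) =
      conj c * (A p (Fin.castLE hnt q) * (y q : ℂ)) := by
  rw [Finset.sum_eq_single p]
  · rw [Finset.sum_eq_single q]
    · simp [sg]; ring
    · intro k _ hk; simp [sg, hk]
    · simp
  · intro i _ hi
    apply Finset.sum_eq_zero
    intro k _
    simp [sg, hi]
  · simp

lemma G2_sg (hnt : n ≤ t) (y : Fin n → ℝ) (A : Matrix (Fin n) (Fin t) ℂ)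
    (p q : Fin t) (c : ℂ) :
    (∑ i, ∑ j, A i j * (y i : ℂ) * (sg p q c) j (Fin.castLE hnt i)) =
      if h : (q : ℕ) < n then c * (A ⟨q, h⟩ p * (y ⟨q, h⟩ : ℂ)) else 0 := by
  split
  · next h =>
    rw [Finset.sum_eq_single (⟨(q : ℕ), h⟩ : Fin n)]
    · rw [Finset.sum_eq_single p]
      · have : Fin.castLE hnt (⟨(q : ℕ), h⟩ : Fin n) = q := Fin.ext rfl
        simp [sg, this]; ring
      · intro j _ hj; simp [sg, hj]
      · simp
    · intro i _ hi
      apply Finset.sum_eq_zero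
      intro j _
      have : Fin.castLE hnt i ≠ q := by
        intro hh
        exact hi (Fin.ext (by simpa using congrArg Fin.val hh))
      simp [sg, this]
    · simp
  · next h =>
    apply Finset.sum_eq_zero
    intro i _
    apply Finset.sum_eq_zero
    intro j _
    have : Fin.castLE hnt i ≠ q := by
      intro hh
      exact h (by rw [← hh]; simpa using i.2)
    simp [sg, this]

noncomputable def Z1mat (hnt : n ≤ t) (y : Fin n → ℝ) (A : Matrix (Fin n) (Fin t) ℂ) :
    Matrix (Fin n) (Fin n) ℂ :=
  Matrix.of fun i k =>
    if i = k then (Complex.I * ((A i (Fin.castLE hnt i)).im : ℂ)) / (y i : ℂ)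
    else ((y k : ℂ) * A i (Fin.castLE hnt k) + (y i : ℂ) * conj (A k (Fin.castLE hnt i))) /
      ((y k : ℂ) ^ 2 - (y i : ℂ) ^ 2)

noncomputable def Z2mat (hnt : n ≤ t) (y : Fin n → ℝ) (A : Matrix (Fin n) (Fin t) ℂ) :
    Matrix (Fin t) (Fin t) ℂ :=
  Matrix.of fun j l =>
    if hj : (j : ℕ) < n then
      (if hl : (l : ℕ) < n then
        (if (j : ℕ) = (l : ℕ) then 0
         else ((y ⟨j, hj⟩ : ℂ) * A ⟨j, hj⟩ l + (y ⟨l, hl⟩ : ℂ) * conj (A ⟨l, hl⟩ j)) /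
           ((y ⟨l, hl⟩ : ℂ) ^ 2 - (y ⟨j, hj⟩ : ℂ) ^ 2))
       else -(A ⟨j, hj⟩ l) / (y ⟨j, hj⟩ : ℂ))
    else (if hl : (l : ℕ) < n then conj (A ⟨l, hl⟩ j) / (y ⟨l, hl⟩ : ℂ) else 0)

lemma Z1_skew (hnt : n ≤ t) (y : Fin n → ℝ) (A : Matrix (Fin n) (Fin t) ℂ) :
    (Z1mat hnt y A)ᴴ = -(Z1mat hnt y A) := by
  ext i k
  simp only [conjTranspose_apply, Matrix.neg_apply, Z1mat, of_apply, RCLike.star_def]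
  by_cases h : k = i
  · subst h
    rw [if_pos (rfl : k = k)]
    rw [map_div₀, _root_.map_mul, Complex.conj_I, Complex.conj_ofReal, Complex.conj_ofReal]
    ring
  · rw [if_neg h, if_neg (fun hh => h hh.symm), map_div₀, _root_.map_add, _root_.map_mul,
      _root_.map_mul, _root_.map_sub, _root_.map_pow, _root_.map_pow, Complex.conj_ofReal,
      Complex.conj_ofReal, Complex.conj_conj]
    rw [show (y i : ℂ) ^ 2 - (y k : ℂ) ^ 2 = -((y k : ℂ) ^ 2 - (y i : ℂ) ^ 2) from by ring,
      div_neg]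
    ring

lemma Z2_skew (hnt : n ≤ t) (y : Fin n → ℝ) (A : Matrix (Fin n) (Fin t) ℂ) :
    (Z2mat hnt y A)ᴴ = -(Z2mat hnt y A) := by
  ext j l
  simp only [conjTranspose_apply, Matrix.neg_apply, Z2mat, of_apply, RCLike.star_def]
  by_cases hj : (j : ℕ) < n <;> by_cases hl : (l : ℕ) < n <;>
    simp only [hj, hl, dite_true, dite_false]
  · by_cases he : (j : ℕ) = (l : ℕ)
    · rw [if_pos he, if_pos he.symm]
      simp
    · rw [if_neg he, if_neg (fun hh => he hh.symm), map_div₀, _root_.map_add, _root_.map_mul,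
        _root_.map_mul, _root_.map_sub, _root_.map_pow, _root_.map_pow, Complex.conj_ofReal,
        Complex.conj_ofReal, Complex.conj_conj]
      rw [show (y ⟨j, hj⟩ : ℂ) ^ 2 - (y ⟨l, hl⟩ : ℂ) ^ 2
            = -((y ⟨l, hl⟩ : ℂ) ^ 2 - (y ⟨j, hj⟩ : ℂ) ^ 2) from by ring, div_neg]
      ring
  · rw [map_div₀, Complex.conj_conj, Complex.conj_ofReal, neg_div, neg_neg]
  · rw [map_div₀, _root_.map_neg, Complex.conj_ofReal, neg_div]
  · simp

lemma decomp (hnt : n ≤ t) (y : Fin n → ℝ) (hy : ∀ i, y i ≠ 0)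
    (hsq : ∀ i k : Fin n, i ≠ k → (y i : ℂ) ^ 2 ≠ (y k : ℂ) ^ 2)
    (A : Matrix (Fin n) (Fin t) ℂ) :
    A = rdiag n t (fun i => (A i (Fin.castLE hnt i)).re) +
      (Z1mat hnt y A * rdiag n t y + rdiag n t y * (Z2mat hnt y A)ᴴ) := by
  have hyne : ∀ i, (y i : ℂ) ≠ 0 := fun i => Complex.ofReal_ne_zero.mpr (hy i)
  ext i j
  rw [Matrix.add_apply, Matrix.add_apply, mulD hnt, Dmul hnt, conjTranspose_apply, RCLike.star_def]
  by_cases hj : (j : ℕ) < n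
  · rw [dif_pos hj]
    by_cases hji : (j : ℕ) = (i : ℕ)
    · have hj_eq : j = Fin.castLE hnt i := Fin.ext hji
      have hki : (⟨(j : ℕ), hj⟩ : Fin n) = i := Fin.ext hji
      subst hj_eq
      rw [hki]
      rw [show rdiag n t (fun i => (A i (Fin.castLE hnt i)).re) i (Fin.castLE hnt i)
            = ((A i (Fin.castLE hnt i)).re : ℂ) from by simp [rdiag]]
      rw [show Z1mat hnt y A i i = Complex.I * ((A i (Fin.castLE hnt i)).im : ℂ) / (y i : ℂ)
            from by simp [Z1mat]]
      rw [show Z2mat hnt y A (Fin.castLE hnt i) (Fin.castLE hnt i) = 0 from by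
        simp [Z2mat, dif_pos (show ((Fin.castLE hnt i : Fin t) : ℕ) < n from by
          simpa using i.2)]]
      rw [map_zero, mul_zero, add_zero, div_mul_cancel₀ _ (hyne i)]
      rw [mul_comm Complex.I]
      exact (Complex.re_add_im _).symm
    · have hki : (⟨(j : ℕ), hj⟩ : Fin n) ≠ i := fun hh => hji (by rw [← hh])
      set k : Fin n := ⟨(j : ℕ), hj⟩ with hk
      have hjk : Fin.castLE hnt k = j := Fin.ext rfl
      rw [show rdiag n t (fun i => (A i (Fin.castLE hnt i)).re) i j = 0 from by
        simp [rdiag, hji]]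
      rw [show Z1mat hnt y A i k
            = ((y k : ℂ) * A i (Fin.castLE hnt k) + (y i : ℂ) * conj (A k (Fin.castLE hnt i))) /
              ((y k : ℂ) ^ 2 - (y i : ℂ) ^ 2) from by
        rw [Z1mat, of_apply, if_neg (fun hh => hki hh.symm)]]
      rw [show Z2mat hnt y A j (Fin.castLE hnt i)
            = ((y k : ℂ) * A k (Fin.castLE hnt i) + (y i : ℂ) * conj (A i j)) /
              ((y i : ℂ) ^ 2 - (y k : ℂ) ^ 2) from by
        rw [Z2mat, of_apply, dif_pos hj,
          dif_pos (show ((Fin.castLE hnt i : Fin t) : ℕ) < n from by simpa using i.2)]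
        rw [if_neg (by simpa using hji)]
        simp; rfl]
      rw [map_div₀, _root_.map_add, _root_.map_mul, _root_.map_mul, _root_.map_sub,
        _root_.map_pow, _root_.map_pow, Complex.conj_ofReal, Complex.conj_ofReal,
        Complex.conj_conj, hjk]
      have h1 : (y k : ℂ) ^ 2 - (y i : ℂ) ^ 2 ≠ 0 := sub_ne_zero.mpr (hsq k i (fun hh => hki (hh ▸ rfl)))
      have h2 : (y i : ℂ) ^ 2 - (y k : ℂ) ^ 2 ≠ 0 := sub_ne_zero.mpr (hsq i k (fun hh => hki (hh ▸ rfl)))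
      field_simp
      ring
  · rw [dif_neg hj]
    rw [show rdiag n t (fun i => (A i (Fin.castLE hnt i)).re) i j = 0 from by
      have : (j : ℕ) ≠ (i : ℕ) := fun hh => hj (hh ▸ i.2)
      simp [rdiag, this]]
    rw [show Z2mat hnt y A j (Fin.castLE hnt i) = conj (A i j) / (y i : ℂ) from by
      rw [Z2mat, of_apply, dif_neg hj,
        dif_pos (show ((Fin.castLE hnt i : Fin t) : ℕ) < n from by simpa using i.2)]
      simp]
    rw [map_div₀, Complex.conj_conj, Complex.conj_ofReal, mul_comm,
      div_mul_cancel₀ _ (hyne i), zero_add, zero_add]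

end Stmt16Aux


open Stmt16Aux in
/-- For `y ∈ ℝⁿ` with nonzero, pairwise-distinct-in-absolute-value entries, the
`q`-orthogonal complement (`q(A,B) = Re Tr(AB*)`) of the orbit-tangent space
`T = {Z₁ diag(y) + diag(y) Z₂* : Z₁ ∈ u(n), Z₂ ∈ u(t)}` is exactly the space of
real diagonal matrices; consequently `ℂ^{n×t}` is the `q`-orthogonal direct sum
of the real diagonal matrices and `T`. -/
theorem stmt16 (n t : ℕ) (hnt : n ≤ t) (y : Fin n → ℝ)
    (hy : ∀ i, y i ≠ 0)
    (hdist : ∀ i j : Fin n, i ≠ j → |y i| ≠ |y j|) :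
    ({A : Matrix (Fin n) (Fin t) ℂ |
        ∀ B ∈ {B : Matrix (Fin n) (Fin t) ℂ |
          ∃ (Z₁ : Matrix (Fin n) (Fin n) ℂ) (Z₂ : Matrix (Fin t) (Fin t) ℂ),
            Z₁ᴴ = -Z₁ ∧ Z₂ᴴ = -Z₂ ∧ B = Z₁ * rdiag n t y + rdiag n t y * Z₂ᴴ},
          (Matrix.trace (A * Bᴴ)).re = 0}
      = {A : Matrix (Fin n) (Fin t) ℂ | ∃ a : Fin n → ℝ, A = rdiag n t a}) ∧
    (∀ A : Matrix (Fin n) (Fin t) ℂ, ∃ (a : Fin n → ℝ)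
        (Z₁ : Matrix (Fin n) (Fin n) ℂ) (Z₂ : Matrix (Fin t) (Fin t) ℂ),
      Z₁ᴴ = -Z₁ ∧ Z₂ᴴ = -Z₂ ∧
      A = rdiag n t a + (Z₁ * rdiag n t y + rdiag n t y * Z₂ᴴ)) := by
  classical
  have hyne : ∀ i, (y i : ℂ) ≠ 0 := fun i => Complex.ofReal_ne_zero.mpr (hy i)
  have hsq : ∀ i k : Fin n, i ≠ k → (y i : ℂ) ^ 2 ≠ (y k : ℂ) ^ 2 := by
    intro i k hik hh
    have h2 : (y i) ^ 2 = (y k) ^ 2 := by exact_mod_cast hh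
    exact hdist i k hik ((sq_eq_sq_iff_abs_eq_abs _ _).mp h2)
  constructor
  · ext A
    simp only [Set.mem_setOf_eq]
    constructor
    · intro h
      -- Relation 1 (from the u(n) directions)
      have R1 : ∀ p q : Fin n,
          A p (Fin.castLE hnt q) * (y q : ℂ) = conj (A q (Fin.castLE hnt p) * (y p : ℂ)) := by
        intro p q
        apply key
        intro c
        have hB := h ((sg p q c - sg q p (conj c)) * rdiag n t y +
            rdiag n t y * (0 : Matrix (Fin t) (Fin t) ℂ)ᴴ)
          ⟨_, 0, sg_skew p q c, by simp, rfl⟩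
        rw [conjTranspose_zero, Matrix.mul_zero, add_zero, Matrix.sub_mul,
          conjTranspose_sub, Matrix.mul_sub, trace_sub, traceZ1 hnt, traceZ1 hnt,
          G1_sg hnt, G1_sg hnt, Complex.conj_conj] at hB
        exact hB
      -- Relation 2 (columns beyond n vanish)
      have R2 : ∀ (k : Fin n) (p : Fin t), ¬ (p : ℕ) < n → A k p = 0 := by
        intro k p hp
        have h0 : ∀ c : ℂ, (c * (A k p * (y k : ℂ))).re = 0 := by
          intro c
          have hB := h ((0 : Matrix (Fin n) (Fin n) ℂ) * rdiag n t y +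
              rdiag n t y * (sg p (Fin.castLE hnt k) c -
                sg (Fin.castLE hnt k) p (conj c))ᴴ)
            ⟨0, _, by simp, sg_skew _ _ c, rfl⟩
          rw [Matrix.zero_mul, zero_add, conjTranspose_sub, Matrix.mul_sub,
            conjTranspose_sub, Matrix.mul_sub, trace_sub] at hB
          rw [show rdiag n t y * (sg p (Fin.castLE hnt k) c)ᴴ
                = rdiag n t y * (sg p (Fin.castLE hnt k) c)ᴴ from rfl] at hB
          rw [traceZ2 hnt, traceZ2 hnt, G2_sg hnt, G2_sg hnt,
            dif_pos (show ((Fin.castLE hnt k : Fin t) : ℕ) < n from by simpa using k.2),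
            dif_neg hp, sub_zero] at hB
          simpa using hB
        have h1 := key0 _ h0
        rcases mul_eq_zero.mp h1 with h' | h'
        · exact h'
        · exact absurd h' (hyne k)
      -- Relation 3 (from the u(t) directions, inside the first block)
      have R3 : ∀ i k : Fin n,
          A i (Fin.castLE hnt k) * (y i : ℂ) = conj (A k (Fin.castLE hnt i) * (y k : ℂ)) := by
        intro i k
        apply key
        intro c
        have hB := h ((0 : Matrix (Fin n) (Fin n) ℂ) * rdiag n t y +
            rdiag n t y * (sg (Fin.castLE hnt k) (Fin.castLE hnt i) (conj c) -
              sg (Fin.castLE hnt i) (Fin.castLE hnt k) (conj (conj c)))ᴴ)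
          ⟨0, _, by simp, sg_skew _ _ (conj c), rfl⟩
        rw [Matrix.zero_mul, zero_add, conjTranspose_sub, Matrix.mul_sub,
          conjTranspose_sub, Matrix.mul_sub, trace_sub, traceZ2 hnt, traceZ2 hnt,
          G2_sg hnt, G2_sg hnt,
          dif_pos (show ((Fin.castLE hnt i : Fin t) : ℕ) < n from by simpa using i.2),
          dif_pos (show ((Fin.castLE hnt k : Fin t) : ℕ) < n from by simpa using k.2),
          Complex.conj_conj] at hB
        simp only [Fin.coe_castLE, Fin.eta] at hB
        exact hB
      refine ⟨fun i => (A i (Fin.castLE hnt i)).re, ?_⟩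
      ext i j
      by_cases hj : (j : ℕ) < n
      · by_cases hji : (j : ℕ) = (i : ℕ)
        · have hj_eq : j = Fin.castLE hnt i := Fin.ext hji
          subst hj_eq
          have h1 := R1 i i
          rw [_root_.map_mul, Complex.conj_ofReal] at h1
          have hreal : A i (Fin.castLE hnt i) = conj (A i (Fin.castLE hnt i)) :=
            mul_right_cancel₀ (hyne i) h1
          rw [show rdiag n t (fun i => (A i (Fin.castLE hnt i)).re) i (Fin.castLE hnt i)
                = ((A i (Fin.castLE hnt i)).re : ℂ) from by simp [rdiag]]
          exact (Complex.conj_eq_iff_re.mp hreal.symm).symm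
        · set k : Fin n := ⟨(j : ℕ), hj⟩ with hk
          have hki : k ≠ i := fun hh => hji (by rw [← hh])
          have hjk : Fin.castLE hnt k = j := Fin.ext rfl
          set u := A i (Fin.castLE hnt k) with hu
          set C := conj (A k (Fin.castLE hnt i)) with hC
          have e1 : u * (y k : ℂ) = C * (y i : ℂ) := by
            have := R1 i k
            rw [_root_.map_mul, Complex.conj_ofReal] at this
            exact this
          have e2 : u * (y i : ℂ) = C * (y k : ℂ) := by
            have := R3 i k
            rw [_root_.map_mul, Complex.conj_ofReal] at this
            exact this
          have e3 : C * ((y i : ℂ) ^ 2 - (y k : ℂ) ^ 2) = 0 := by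
            linear_combination (y k : ℂ) * e2 - (y i : ℂ) * e1
          have hC0 : C = 0 := by
            rcases mul_eq_zero.mp e3 with h' | h'
            · exact h'
            · exact absurd (sub_eq_zero.mp h') (hsq i k (fun hh => hki hh.symm))
          have hu0 : u = 0 := by
            have : u * (y k : ℂ) = 0 := by rw [e1, hC0, zero_mul]
            rcases mul_eq_zero.mp this with h' | h'
            · exact h'
            · exact absurd h' (hyne k)
          rw [show rdiag n t (fun i => (A i (Fin.castLE hnt i)).re) i j = 0 from by
            simp [rdiag, hji]]
          rw [← hjk]
          exact hu0
      · rw [show rdiag n t (fun i => (A i (Fin.castLE hnt i)).re) i j = 0 from by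
          have : (j : ℕ) ≠ (i : ℕ) := fun hh => hj (hh ▸ i.2)
          simp [rdiag, this]]
        exact R2 i j hj
    · rintro ⟨a, rfl⟩ B ⟨Z₁, Z₂, hZ₁, hZ₂, rfl⟩
      rw [conjTranspose_add, Matrix.mul_add, trace_add, Complex.add_re]
      have d1 : (Matrix.trace (rdiag n t a * (Z₁ * rdiag n t y)ᴴ)).re = 0 := by
        rw [traceZ1 hnt, Complex.re_sum]
        apply Finset.sum_eq_zero
        intro i _
        rw [Complex.re_sum]
        apply Finset.sum_eq_zero
        intro k _
        by_cases hik : k = i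
        · subst hik
          have hz : (Z₁ k k).re = 0 := by
            have h1 := congrFun (congrFun hZ₁ k) k
            simp only [conjTranspose_apply, Matrix.neg_apply, RCLike.star_def] at h1
            have h2 := congrArg Complex.re h1
            rw [Complex.conj_re, Complex.neg_re] at h2
            linarith
          rw [show rdiag n t a k (Fin.castLE hnt k) = ((a k : ℝ) : ℂ) from by simp [rdiag]]
          rw [show ((a k : ℝ) : ℂ) * conj (Z₁ k k) * ((y k : ℝ) : ℂ)
                = ((a k * y k : ℝ) : ℂ) * conj (Z₁ k k) from by push_cast; ring]
          rw [Complex.re_ofReal_mul, Complex.conj_re, hz, mul_zero]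
        · rw [show rdiag n t a i (Fin.castLE hnt k) = 0 from by
            have : (k : ℕ) ≠ (i : ℕ) := fun hh => hik (Fin.ext hh)
            simp [rdiag, this]]
          rw [zero_mul, zero_mul, Complex.zero_re]
      have d2 : (Matrix.trace (rdiag n t a * (rdiag n t y * Z₂ᴴ)ᴴ)).re = 0 := by
        rw [traceZ2 hnt, Complex.re_sum]
        apply Finset.sum_eq_zero
        intro i _
        rw [Complex.re_sum]
        apply Finset.sum_eq_zero
        intro j _
        by_cases hji : (j : ℕ) = (i : ℕ)
        · have hj_eq : j = Fin.castLE hnt i := Fin.ext hji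
          subst hj_eq
          have hz : (Z₂ (Fin.castLE hnt i) (Fin.castLE hnt i)).re = 0 := by
            have h1 := congrFun (congrFun hZ₂ (Fin.castLE hnt i)) (Fin.castLE hnt i)
            simp only [conjTranspose_apply, Matrix.neg_apply, RCLike.star_def] at h1
            have h2 := congrArg Complex.re h1
            rw [Complex.conj_re, Complex.neg_re] at h2
            linarith
          rw [show rdiag n t a i (Fin.castLE hnt i) = ((a i : ℝ) : ℂ) from by simp [rdiag]]
          rw [show ((a i : ℝ) : ℂ) * ((y i : ℝ) : ℂ) * Z₂ (Fin.castLE hnt i) (Fin.castLE hnt i)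
                = ((a i * y i : ℝ) : ℂ) * Z₂ (Fin.castLE hnt i) (Fin.castLE hnt i) from by
              push_cast; ring]
          rw [Complex.re_ofReal_mul, hz, mul_zero]
        · rw [show rdiag n t a i j = 0 from by simp [rdiag, hji]]
          rw [zero_mul, zero_mul, Complex.zero_re]
      rw [d1, d2, add_zero]
  · intro A
    exact ⟨fun i => (A i (Fin.castLE hnt i)).re, Z1mat hnt y A, Z2mat hnt y A,
      Z1_skew hnt y A, Z2_skew hnt y A, decomp hnt y hy hsq A⟩
end
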